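/- Let S_n be a random walk with i.i.d. increments satisfying E X < 0 and P(X > 0) > 0, and let T₁⁺ = inf{n > 0 : S_n > 0}, T₁⁻ = inf{n>0 : S_n ≤ 0}, M = sup_{n≥0} S_n. Then P(T₁⁺ = ∞) = P(M = 0) = 1/E[T₁⁻], where E[T₁⁻] < ∞. -/

import Mathlib

open MeasureTheory ProbabilityTheory NNReal ENNReal Set Filter Topology

/-- partial sums of a finite vector, with junk extension -/
noncomputable def rwPsum (n : ℕ) (x : Fin n → ℝ) (j : ℕ) : ℝ :=
  ∑ i ∈ Finset.range j, if h : i < n then x ⟨i, h⟩ else 0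

lemma rwPsum_measurable (n j : ℕ) : Measurable (fun x : Fin n → ℝ => rwPsum n x j) := by
  apply Finset.measurable_sum
  intro i _
  rcases Nat.lt_or_ge i n with h | h
  · simp only [dif_pos h]; exact measurable_pi_apply _
  · simp only [dif_neg (Nat.not_lt.2 h)]; exact measurable_const

def rwD (n : ℕ) : Set (Fin n → ℝ) := {x | ∀ j, 1 ≤ j → j ≤ n → 0 < rwPsum n x j}
def rwE (m : ℕ) : Set (Fin m → ℝ) := {x | ∀ j, 1 ≤ j → j ≤ m → rwPsum m x j ≤ 0}
def rwG (k : ℕ) : Set (Fin k → ℝ) := {x | ∀ j, j < k → rwPsum k x j < rwPsum k x k}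

lemma rwD_mble (n : ℕ) : MeasurableSet (rwD n) := by
  have : rwD n = ⋂ j, ⋂ (_ : 1 ≤ j ∧ j ≤ n), {x | 0 < rwPsum n x j} := by
    ext x; simp only [rwD, mem_iInter, mem_setOf_eq]; tauto
  rw [this]
  exact MeasurableSet.iInter fun j => MeasurableSet.iInter fun _ =>
    measurableSet_lt measurable_const (rwPsum_measurable n j)

lemma rwE_mble (m : ℕ) : MeasurableSet (rwE m) := by
  have : rwE m = ⋂ j, ⋂ (_ : 1 ≤ j ∧ j ≤ m), {x | rwPsum m x j ≤ 0} := by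
    ext x; simp only [rwE, mem_iInter, mem_setOf_eq]; tauto
  rw [this]
  exact MeasurableSet.iInter fun j => MeasurableSet.iInter fun _ =>
    measurableSet_le (rwPsum_measurable m j) measurable_const

lemma rwG_mble (k : ℕ) : MeasurableSet (rwG k) := by
  have : rwG k = ⋂ j, ⋂ (_ : j < k), {x | rwPsum k x j < rwPsum k x k} := by
    ext x; simp only [rwG, mem_iInter, mem_setOf_eq]
  rw [this]
  exact MeasurableSet.iInter fun j => MeasurableSet.iInter fun _ =>
    measurableSet_lt (rwPsum_measurable k j) (rwPsum_measurable k k)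

/-- Joint law of finitely many of the iid variables is the product measure. -/
lemma rw_joint_law {Ω : Type*} [MeasurableSpace Ω] (P : Measure Ω) [IsProbabilityMeasure P]
    (X : ℕ → Ω → ℝ) (hmeas : ∀ i, Measurable (X i))
    (hindep : iIndepFun X P)
    (hident : ∀ i, Measure.map (X i) P = Measure.map (X 0) P)
    {n : ℕ} (g : Fin n → ℕ) (hg : Function.Injective g) :
    Measure.map (fun ω (i : Fin n) => X (g i) ω) P
      = Measure.pi (fun _ : Fin n => Measure.map (X 0) P) := by
  refine (Measure.pi_eq fun s hs => ?_).symm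
  have hvec : Measurable (fun ω (i : Fin n) => X (g i) ω) :=
    measurable_pi_lambda _ (fun i => hmeas (g i))
  rw [Measure.map_apply hvec (MeasurableSet.univ_pi hs)]
  classical
  set sets : ℕ → Set ℝ := fun j => if h : ∃ i, g i = j then s h.choose else Set.univ with hsets
  have hsets_g : ∀ i : Fin n, sets (g i) = s i := by
    intro i
    have h : ∃ i', g i' = g i := ⟨i, rfl⟩
    simp only [hsets, dif_pos h]
    rw [hg h.choose_spec]
  have hpre : (fun ω (i : Fin n) => X (g i) ω) ⁻¹' Set.pi Set.univ s
      = ⋂ j ∈ Finset.image g Finset.univ, X j ⁻¹' sets j := by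
    ext ω
    simp only [Set.mem_preimage, Set.mem_pi, Set.mem_univ, true_imp_iff, Set.mem_iInter,
      Finset.mem_image, Finset.mem_univ, true_and]
    constructor
    · rintro h j ⟨i, rfl⟩
      rw [hsets_g i]; exact h i
    · intro h i
      rw [← hsets_g i]; exact h (g i) ⟨i, rfl⟩
  rw [hpre, hindep.measure_inter_preimage_eq_mul (Finset.image g Finset.univ)
    (fun j _ => ?_), Finset.prod_image (fun a _ b _ h => hg h)]
  · refine Finset.prod_congr rfl fun i _ => ?_
    rw [hsets_g i, ← Measure.map_apply (hmeas (g i)) (hs i), hident (g i)]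
  · simp only [hsets]
    split_ifs with h
    · exact hs _
    · exact MeasurableSet.univ

lemma rw_block_indep {Ω : Type*} [MeasurableSpace Ω] {P : Measure Ω}
    (X : ℕ → Ω → ℝ) (hmeas : ∀ i, Measurable (X i))
    (hindep : iIndepFun X P) (k m : ℕ) :
    IndepFun (fun ω (i : Fin k) => X i ω) (fun ω (i : Fin m) => X (k + i) ω) P := by
  have hdisj : Disjoint (Finset.range k) (Finset.Ico k (k + m)) := by
    simp only [Finset.disjoint_left, Finset.mem_range, Finset.mem_Ico]
    omega
  have h := hindep.indepFun_finset (Finset.range k) (Finset.Ico k (k + m)) hdisj hmeas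
  exact h.comp
    (φ := fun (x : {i // i ∈ Finset.range k} → ℝ) (i : Fin k) =>
      x ⟨i, Finset.mem_range.2 i.isLt⟩)
    (ψ := fun (x : {i // i ∈ Finset.Ico k (k + m)} → ℝ) (i : Fin m) =>
      x ⟨k + i, Finset.mem_Ico.2 ⟨Nat.le_add_right _ _, by omega⟩⟩)
    (measurable_pi_lambda _ fun i => measurable_pi_apply _)
    (measurable_pi_lambda _ fun i => measurable_pi_apply _)

/-- For a random walk with i.i.d. increments with `E X < 0` and `P(X > 0) > 0`,
with `T₁⁺ = inf{n>0 : S_n > 0}`, `T₁⁻ = inf{n>0 : S_n ≤ 0}`, `M = sup_{n≥0} S_n`: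
`E[T₁⁻] < ∞` (expressed via `E[T₁⁻] = Σ_{n≥0} P(T₁⁻ > n)`) and
`P(T₁⁺ = ∞) = P(M = 0) = 1/E[T₁⁻]`. -/
theorem stmt_19 {Ω : Type*} [MeasurableSpace Ω] (P : Measure Ω) [IsProbabilityMeasure P]
    (X : ℕ → Ω → ℝ) (hmeas : ∀ i, Measurable (X i))
    (hindep : iIndepFun X P)
    (hident : ∀ i, Measure.map (X i) P = Measure.map (X 0) P)
    (hint : Integrable (X 0) P) (hdrift : ∫ ω, X 0 ω ∂P < 0)
    (hpos : 0 < (P {ω | 0 < X 0 ω}).toReal)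
    (S : ℕ → Ω → ℝ) (hS : ∀ n ω, S n ω = ∑ i ∈ Finset.range n, X i ω)
    (M : Ω → ℝ) (hM : ∀ ω, M ω = ⨆ n : ℕ, S n ω)
    (q : ℕ → ℝ) (hq : ∀ n, q n = (P {ω | ∀ j, 1 ≤ j → j ≤ n → 0 < S j ω}).toReal) :
    Summable q ∧
    (P {ω | ∀ j, 1 ≤ j → S j ω ≤ 0}).toReal = (P {ω | M ω = 0}).toReal ∧
    (P {ω | ∀ j, 1 ≤ j → S j ω ≤ 0}).toReal = 1 / ∑' n : ℕ, q n := by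
  classical
  set μ : Measure ℝ := Measure.map (X 0) P with hμdef
  have law : ∀ {n : ℕ} (g : Fin n → ℕ), Function.Injective g →
      Measure.map (fun ω (i : Fin n) => X (g i) ω) P = Measure.pi (fun _ : Fin n => μ) :=
    fun g hg => rw_joint_law P X hmeas hindep hident g hg
  have hlawset : ∀ {n : ℕ} (g : Fin n → ℕ), Function.Injective g →
      ∀ (C : Set (Fin n → ℝ)), MeasurableSet C →
      P ((fun ω (i : Fin n) => X (g i) ω) ⁻¹' C) = Measure.pi (fun _ : Fin n => μ) C := by
    intro n g hg C hC
    rw [← Measure.map_apply (measurable_pi_lambda _ fun i => hmeas (g i)) hC, law g hg]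
  -- pointwise partial-sum computations
  have psum_vec : ∀ (n j : ℕ), j ≤ n → ∀ ω,
      rwPsum n (fun i : Fin n => X i ω) j = S j ω := by
    intro n j hj ω
    rw [hS, rwPsum]
    refine Finset.sum_congr rfl fun i hi => ?_
    have h : i < n := lt_of_lt_of_le (Finset.mem_range.1 hi) hj
    simp [h]
  have psum_vec' : ∀ (k m j : ℕ), j ≤ m → ∀ ω,
      rwPsum m (fun i : Fin m => X (k + i) ω) j = S (k + j) ω - S k ω := by
    intro k m j hj ω
    have h1 : rwPsum m (fun i : Fin m => X (k + i) ω) j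
        = ∑ i ∈ Finset.range j, X (k + i) ω := by
      rw [rwPsum]
      refine Finset.sum_congr rfl fun i hi => ?_
      have h : i < m := lt_of_lt_of_le (Finset.mem_range.1 hi) hj
      simp [h]
    rw [h1, hS, hS, ← Finset.sum_Ico_eq_sub _ (Nat.le_add_right k j),
      Finset.sum_Ico_eq_sum_range]
    simp
  have psum_rvec : ∀ (n j : ℕ), j ≤ n → ∀ ω,
      rwPsum n (fun i : Fin n => X (n - 1 - i) ω) j = S n ω - S (n - j) ω := by
    intro n j hj ω
    have h1 : rwPsum n (fun i : Fin n => X (n - 1 - i) ω) j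
        = ∑ i ∈ Finset.range j, X (n - 1 - i) ω := by
      rw [rwPsum]
      refine Finset.sum_congr rfl fun i hi => ?_
      have h : i < n := lt_of_lt_of_le (Finset.mem_range.1 hi) hj
      simp [h]
    rw [h1, hS, hS, ← Finset.sum_Ico_eq_sub _ (Nat.sub_le n j)]
    refine Finset.sum_nbij' (i := fun a => n - 1 - a) (j := fun t => n - 1 - t)
      ?_ ?_ ?_ ?_ ?_
    · intro a ha
      have := Finset.mem_range.1 ha
      show n - 1 - a ∈ Finset.Ico (n - j) n
      exact Finset.mem_Ico.2 (by omega)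
    · intro t ht
      have := Finset.mem_Ico.1 ht
      show n - 1 - t ∈ Finset.range j
      exact Finset.mem_range.2 (by omega)
    · intro a ha
      have := Finset.mem_range.1 ha
      show n - 1 - (n - 1 - a) = a
      omega
    · intro t ht
      have := Finset.mem_Ico.1 ht
      show n - 1 - (n - 1 - t) = t
      omega
    · intro a ha
      rfl
  -- event identifications
  have Qev_eq : ∀ n : ℕ, {ω | ∀ j, 1 ≤ j → j ≤ n → 0 < S j ω}
      = (fun ω (i : Fin n) => X i ω) ⁻¹' rwD n := by
    intro n; ext ω
    simp only [mem_setOf_eq, mem_preimage, rwD]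
    constructor
    · intro h j h1 h2; rw [psum_vec n j h2 ω]; exact h j h1 h2
    · intro h j h1 h2; have := h j h1 h2; rwa [psum_vec n j h2 ω] at this
  have Uev_eq : ∀ m : ℕ, {ω | ∀ j, 1 ≤ j → j ≤ m → S j ω ≤ 0}
      = (fun ω (i : Fin m) => X i ω) ⁻¹' rwE m := by
    intro m; ext ω
    simp only [mem_setOf_eq, mem_preimage, rwE]
    constructor
    · intro h j h1 h2; rw [psum_vec m j h2 ω]; exact h j h1 h2
    · intro h j h1 h2; have := h j h1 h2; rwa [psum_vec m j h2 ω] at this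
  have Aev_eq : ∀ k m : ℕ, {ω | ∀ j, 1 ≤ j → j ≤ m → S (k + j) ω ≤ S k ω}
      = (fun ω (i : Fin m) => X (k + i) ω) ⁻¹' rwE m := by
    intro k m; ext ω
    simp only [mem_setOf_eq, mem_preimage, rwE]
    constructor
    · intro h j h1 h2; rw [psum_vec' k m j h2 ω]; exact sub_nonpos.2 (h j h1 h2)
    · intro h j h1 h2
      have := h j h1 h2; rw [psum_vec' k m j h2 ω] at this; linarith
  have Bev_eqG : ∀ k : ℕ, {ω | ∀ j, j < k → S j ω < S k ω}
      = (fun ω (i : Fin k) => X i ω) ⁻¹' rwG k := by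
    intro k; ext ω
    simp only [mem_setOf_eq, mem_preimage, rwG]
    constructor
    · intro h j hj
      rw [psum_vec k j hj.le ω, psum_vec k k le_rfl ω]; exact h j hj
    · intro h j hj
      have := h j hj; rwa [psum_vec k j hj.le ω, psum_vec k k le_rfl ω] at this
  have Bev_eqD : ∀ k : ℕ, {ω | ∀ j, j < k → S j ω < S k ω}
      = (fun ω (i : Fin k) => X (k - 1 - i) ω) ⁻¹' rwD k := by
    intro k; ext ω
    simp only [mem_setOf_eq, mem_preimage, rwD]
    constructor
    · intro h j h1 h2
      rw [psum_rvec k j h2 ω]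
      have := h (k - j) (by omega)
      linarith
    · intro h j hj
      have h2 := h (k - j) (by omega) (by omega)
      rw [psum_rvec k (k - j) (by omega) ω] at h2
      have hkk : k - (k - j) = j := by omega
      rw [hkk] at h2
      linarith
  -- measure identities
  have hrev_inj : ∀ k : ℕ, Function.Injective (fun i : Fin k => k - 1 - (i : ℕ)) := by
    intro k a b h
    have ha := a.isLt; have hb := b.isLt
    have h' : k - 1 - (a : ℕ) = k - 1 - (b : ℕ) := h
    exact Fin.ext (by omega)
  have hadd_inj : ∀ k m : ℕ, Function.Injective (fun i : Fin m => k + (i : ℕ)) := by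
    intro k m a b h
    have h' : k + (a : ℕ) = k + (b : ℕ) := h
    exact Fin.ext (by omega)
  have hQ : ∀ n : ℕ, P {ω | ∀ j, 1 ≤ j → j ≤ n → 0 < S j ω}
      = Measure.pi (fun _ : Fin n => μ) (rwD n) := by
    intro n
    rw [Qev_eq n]
    exact hlawset (fun i : Fin n => (i : ℕ)) Fin.val_injective _ (rwD_mble n)
  have hB : ∀ k : ℕ, P {ω | ∀ j, j < k → S j ω < S k ω}
      = P {ω | ∀ j, 1 ≤ j → j ≤ k → 0 < S j ω} := by
    intro k
    rw [hQ k, Bev_eqD k]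
    exact hlawset (fun i : Fin k => k - 1 - (i : ℕ)) (hrev_inj k) _ (rwD_mble k)
  have hU : ∀ m : ℕ, P {ω | ∀ j, 1 ≤ j → j ≤ m → S j ω ≤ 0}
      = Measure.pi (fun _ : Fin m => μ) (rwE m) := by
    intro m
    rw [Uev_eq m]
    exact hlawset (fun i : Fin m => (i : ℕ)) Fin.val_injective _ (rwE_mble m)
  have hA : ∀ k m : ℕ, P {ω | ∀ j, 1 ≤ j → j ≤ m → S (k + j) ω ≤ S k ω}
      = P {ω | ∀ j, 1 ≤ j → j ≤ m → S j ω ≤ 0} := by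
    intro k m
    rw [hU m, Aev_eq k m]
    exact hlawset (fun i : Fin m => k + (i : ℕ)) (hadd_inj k m) _ (rwE_mble m)
  -- independence
  have hBA : ∀ k m : ℕ,
      P ({ω | ∀ j, j < k → S j ω < S k ω} ∩ {ω | ∀ j, 1 ≤ j → j ≤ m → S (k + j) ω ≤ S k ω})
      = P {ω | ∀ j, j < k → S j ω < S k ω}
        * P {ω | ∀ j, 1 ≤ j → j ≤ m → S (k + j) ω ≤ S k ω} := by
    intro k m
    rw [Bev_eqG k, Aev_eq k m]
    exact (rw_block_indep X hmeas hindep k m).measure_inter_preimage_eq_mul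
      (rwG k) (rwE m) (rwG_mble k) (rwE_mble m)
  -- limit of truncated "stay nonpositive" events
  set p : ℝ≥0∞ := P {ω | ∀ j, 1 ≤ j → S j ω ≤ 0} with hpdef
  have hUmble : ∀ m : ℕ, MeasurableSet {ω | ∀ j, 1 ≤ j → j ≤ m → S j ω ≤ 0} := by
    intro m; rw [Uev_eq m]
    exact (measurable_pi_lambda _ fun i => hmeas _) (rwE_mble m)
  have hAmble : ∀ k m : ℕ, MeasurableSet {ω | ∀ j, 1 ≤ j → j ≤ m → S (k + j) ω ≤ S k ω} := by
    intro k m; rw [Aev_eq k m]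
    exact (measurable_pi_lambda _ fun i => hmeas _) (rwE_mble m)
  have hBmble : ∀ k : ℕ, MeasurableSet {ω | ∀ j, j < k → S j ω < S k ω} := by
    intro k; rw [Bev_eqG k]
    exact (measurable_pi_lambda _ fun i => hmeas _) (rwG_mble k)
  have hUInter : {ω | ∀ j, 1 ≤ j → S j ω ≤ 0}
      = ⋂ m, {ω | ∀ j, 1 ≤ j → j ≤ m → S j ω ≤ 0} := by
    ext ω; simp only [mem_setOf_eq, mem_iInter]
    exact ⟨fun h m j h1 _ => h j h1, fun h j h1 => h j j h1 le_rfl⟩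
  have hUtend : Tendsto (fun m => P {ω | ∀ j, 1 ≤ j → j ≤ m → S j ω ≤ 0}) atTop (𝓝 p) := by
    rw [hpdef, hUInter]
    exact tendsto_measure_iInter_atTop (fun m => (hUmble m).nullMeasurableSet)
      (fun m m' hmm' ω hω j h1 h2 => hω j h1 (h2.trans hmm')) ⟨0, measure_ne_top _ _⟩
  set D : ℕ → Set Ω := fun k =>
    {ω | ∀ j, j < k → S j ω < S k ω} ∩ {ω | ∀ j, 1 ≤ j → S (k + j) ω ≤ S k ω} with hDdef
  have hAInter : ∀ k : ℕ, {ω | ∀ j, 1 ≤ j → S (k + j) ω ≤ S k ω}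
      = ⋂ m, {ω | ∀ j, 1 ≤ j → j ≤ m → S (k + j) ω ≤ S k ω} := by
    intro k
    ext ω; simp only [mem_setOf_eq, mem_iInter]
    exact ⟨fun h m j h1 _ => h j h1, fun h j h1 => h j j h1 le_rfl⟩
  have hDmble : ∀ k, MeasurableSet (D k) := by
    intro k
    exact (hBmble k).inter (by rw [hAInter k]; exact MeasurableSet.iInter fun m => hAmble k m)
  have hDmeasure : ∀ k, P (D k) = P {ω | ∀ j, 1 ≤ j → j ≤ k → 0 < S j ω} * p := by
    intro k
    have hiter : D k = ⋂ m, ({ω | ∀ j, j < k → S j ω < S k ω}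
        ∩ {ω | ∀ j, 1 ≤ j → j ≤ m → S (k + j) ω ≤ S k ω}) := by
      simp only [hDdef]
      rw [hAInter k, Set.inter_iInter]
    have h1 : Tendsto (fun m => P ({ω | ∀ j, j < k → S j ω < S k ω}
        ∩ {ω | ∀ j, 1 ≤ j → j ≤ m → S (k + j) ω ≤ S k ω})) atTop (𝓝 (P (D k))) := by
      rw [hiter]
      exact tendsto_measure_iInter_atTop
        (fun m => ((hBmble k).inter (hAmble k m)).nullMeasurableSet)
        (fun m m' hmm' => Set.inter_subset_inter_right _
          (fun ω hω j h1 h2 => hω j h1 (h2.trans hmm')))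
        ⟨0, measure_ne_top _ _⟩
    have h2 : Tendsto (fun m => P ({ω | ∀ j, j < k → S j ω < S k ω}
        ∩ {ω | ∀ j, 1 ≤ j → j ≤ m → S (k + j) ω ≤ S k ω})) atTop
        (𝓝 (P {ω | ∀ j, j < k → S j ω < S k ω} * p)) := by
      have heq : (fun m => P ({ω | ∀ j, j < k → S j ω < S k ω}
          ∩ {ω | ∀ j, 1 ≤ j → j ≤ m → S (k + j) ω ≤ S k ω}))
          = fun m => P {ω | ∀ j, j < k → S j ω < S k ω}
            * P {ω | ∀ j, 1 ≤ j → j ≤ m → S j ω ≤ 0} := by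
        funext m; rw [hBA k m, hA k m]
      rw [heq]
      exact ENNReal.Tendsto.const_mul hUtend (Or.inr (measure_ne_top _ _))
    rw [tendsto_nhds_unique h1 h2, hB k]
  -- the D k are pairwise disjoint
  have hDdisj : Pairwise (Function.onFun Disjoint D) := by
    have key : ∀ k l, k < l → Disjoint (D k) (D l) := by
      intro k l hkl
      rw [Set.disjoint_left]
      rintro ω ⟨hB1, hA1⟩ ⟨hB2, hA2⟩
      have h1 : S l ω ≤ S k ω := by
        have := hA1 (l - k) (by omega)
        rwa [show k + (l - k) = l by omega] at this
      have h2 : S k ω < S l ω := hB2 k hkl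
      linarith
    intro k l hkl
    rcases hkl.lt_or_gt with h | h
    · exact key k l h
    · exact (key l k h).symm
  -- strong law of large numbers: eventually negative
  have hneg : ∀ᵐ ω ∂P, ∃ N : ℕ, ∀ n, N ≤ n → S n ω < 0 := by
    have hid : ∀ i, IdentDistrib (X i) (X 0) P P :=
      fun i => ⟨(hmeas i).aemeasurable, (hmeas 0).aemeasurable, hident i⟩
    have hpw : Pairwise (Function.onFun (IndepFun · · P) X) := fun i j hij => hindep.indepFun hij
    filter_upwards [strong_law_ae_real X hint hpw hid] with ω hω
    have h0 : ∀ᶠ n : ℕ in atTop, (∑ i ∈ Finset.range n, X i ω) / n < 0 :=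
      hω.eventually (gt_mem_nhds hdrift)
    rw [Filter.eventually_atTop] at h0
    obtain ⟨N, hN⟩ := h0
    refine ⟨max N 1, fun n hn => ?_⟩
    have hd := hN n (le_trans (le_max_left _ _) hn)
    have hn0 : (0 : ℝ) < n := by
      have : 1 ≤ n := le_trans (le_max_right _ _) hn
      exact_mod_cast this
    rw [hS]
    rcases div_neg_iff.1 hd with ⟨h1, h2⟩ | ⟨h1, h2⟩
    · linarith
    · exact h1
  -- a.e. ω belongs to some D k
  have hcov : ∀ᵐ ω ∂P, ω ∈ ⋃ k, D k := by
    filter_upwards [hneg] with ω hω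
    obtain ⟨N, hN⟩ := hω
    have hS0 : S 0 ω = 0 := by rw [hS]; simp
    have hQex : ∃ k, k ≤ N ∧ ∀ j, j ≤ N → S j ω ≤ S k ω := by
      obtain ⟨k, hk, hmax⟩ := Finset.exists_max_image (Finset.range (N + 1))
        (fun j => S j ω) ⟨0, Finset.mem_range.2 (by omega)⟩
      have hk' := Finset.mem_range.1 hk
      exact ⟨k, by omega, fun j hj => hmax j (Finset.mem_range.2 (by omega))⟩
    obtain ⟨hkN, hkmax⟩ : Nat.find hQex ≤ N ∧ ∀ j, j ≤ N → S j ω ≤ S (Nat.find hQex) ω :=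
      Nat.find_spec hQex
    set k := Nat.find hQex with hkdef
    have hSk0 : 0 ≤ S k ω := by rw [← hS0]; exact hkmax 0 (by omega)
    refine mem_iUnion.2 ⟨k, ⟨fun j hj => ?_, fun j hj1 => ?_⟩⟩
    · rcases lt_or_eq_of_le (hkmax j (by omega)) with h | h
      · exact h
      · exfalso
        have hle : Nat.find hQex ≤ j :=
          Nat.find_le ⟨by omega, fun j' hj' => by rw [h]; exact hkmax j' hj'⟩
        omega
    · rcases le_or_gt (k + j) N with h | h
      · exact hkmax (k + j) h
      · have := hN (k + j) (by omega)
        linarith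
  -- summing up
  have hsum1 : ∑' k, P (D k) = 1 := by
    rw [← measure_iUnion hDdisj hDmble, ← measure_univ (μ := P)]
    exact measure_congr (Filter.eventuallyEq_univ.2 hcov)
  have hsum2 : ∑' k, P {ω | ∀ j, 1 ≤ j → j ≤ k → 0 < S j ω} * p = 1 := by
    rw [← hsum1]; exact tsum_congr fun k => (hDmeasure k).symm
  have hp0 : p ≠ 0 := by
    intro h
    rw [h] at hsum2
    simp at hsum2
  have hpt : p ≠ ∞ := measure_ne_top _ _
  have hT : ∑' k, P {ω | ∀ j, 1 ≤ j → j ≤ k → 0 < S j ω} = 1 / p := by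
    rw [ENNReal.eq_div_iff hp0 hpt, mul_comm, ← ENNReal.tsum_mul_right]
    exact hsum2
  have hTne : ∑' k, P {ω | ∀ j, 1 ≤ j → j ≤ k → 0 < S j ω} ≠ ∞ := by
    rw [hT]
    simp [ENNReal.div_eq_top, hp0, hpt]
  have hqfun : q = fun k => (P {ω | ∀ j, 1 ≤ j → j ≤ k → 0 < S j ω}).toReal := funext hq
  refine ⟨?_, ?_, ?_⟩
  · rw [hqfun]; exact ENNReal.summable_toReal hTne
  · -- the M part
    have hMeq : P {ω | ∀ j, 1 ≤ j → S j ω ≤ 0} = P {ω | M ω = 0} := by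
      refine measure_congr (Filter.eventuallyEq_set.2 ?_)
      filter_upwards [hneg] with ω hω
      obtain ⟨N, hN⟩ := hω
      have hS0 : S 0 ω = 0 := by rw [hS]; simp
      have hbdd : BddAbove (Set.range fun n => S n ω) := by
        obtain ⟨k, hk, hmax⟩ := Finset.exists_max_image (Finset.range (N + 1))
          (fun j => S j ω) ⟨0, Finset.mem_range.2 (by omega)⟩
        refine ⟨max (S k ω) 0, ?_⟩
        rintro x ⟨n, rfl⟩
        rcases le_or_gt n N with h | h
        · exact le_max_of_le_left (hmax n (Finset.mem_range.2 (by omega)))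
        · exact le_max_of_le_right (hN n (by omega)).le
      show (∀ j, 1 ≤ j → S j ω ≤ 0) ↔ M ω = 0
      constructor
      · intro h
        rw [hM]
        refine le_antisymm (ciSup_le fun n => ?_) ?_
        · rcases Nat.eq_zero_or_pos n with rfl | hn
          · exact le_of_eq hS0
          · exact h n hn
        · rw [← hS0]; exact le_ciSup hbdd 0
      · intro h j hj
        have hle := le_ciSup hbdd j
        rw [← hM ω, h] at hle
        exact hle
    rw [hpdef, hMeq]
  · rw [hqfun, ← ENNReal.tsum_toReal_eq (fun k => measure_ne_top P _), hT,
      ENNReal.toReal_div, ENNReal.toReal_one, one_div_one_div]
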